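/- arXiv:2210.08580 — 2 statements merged into one kernel-verified Lean document; each statement's English description precedes it below -/
import Mathlib

section
/- Let Σ be a real N×N_s matrix, let M := Σᵀ Σ have eigendecomposition M = W S Wᵀ with W orthogonal and S diagonal with nonnegative entries, let G satisfy the four Penrose equations for M, and set P^Σ := Σ G Σᵀ. For 0 ≤ n ≤ N_s, let P_n^Σ := Σ M⁺_n Σᵀ, where M⁺_n := W S⁺_n Wᵀ with [S⁺_n]_{ii} = 1/[S]_{ii} if i > N_s − n and [S]_{ii} ≠ 0, and [S⁺_n]_{ii} = 0 otherwise. Then P^Σ P_n^Σ = P_n^Σ P^Σ = P_n^Σ; that is, the filtered projector is dominated by the full quasi-Helmholtz projector. -/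
open Matrix

section Aux

variable {Ns : ℕ} (W : Matrix (Fin Ns) (Fin Ns) ℝ)

lemma aux_mulW (hW : Wᵀ * W = 1) (d e : Fin Ns → ℝ) :
    (W * Matrix.diagonal d * Wᵀ) * (W * Matrix.diagonal e * Wᵀ)
      = W * Matrix.diagonal (fun i => d i * e i) * Wᵀ := by
  have h : Wᵀ * (W * (Matrix.diagonal e * Wᵀ)) = Matrix.diagonal e * Wᵀ := by
    rw [← mul_assoc, hW, one_mul]
  simp only [mul_assoc, h]
  rw [← mul_assoc (Matrix.diagonal d), Matrix.diagonal_mul_diagonal]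

lemma aux_symm (d : Fin Ns → ℝ) :
    (W * Matrix.diagonal d * Wᵀ)ᵀ = W * Matrix.diagonal d * Wᵀ := by
  simp [Matrix.transpose_mul, Matrix.diagonal_transpose, mul_assoc]

/-- Uniqueness of the Moore–Penrose pseudoinverse. -/
lemma aux_pinv_unique (A G G₀ : Matrix (Fin Ns) (Fin Ns) ℝ)
    (h1 : A * G * A = A) (h2 : G * A * G = G)
    (h3 : (A * G)ᵀ = A * G) (h4 : (G * A)ᵀ = G * A)
    (e1 : A * G₀ * A = A) (e2 : G₀ * A * G₀ = G₀)
    (e3 : (A * G₀)ᵀ = A * G₀) (e4 : (G₀ * A)ᵀ = G₀ * A) :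
    G = G₀ := by
  have ha : G₀ * A = G * A * (G₀ * A) := by
    calc G₀ * A = (G₀ * A)ᵀ := e4.symm
    _ = (G₀ * (A * G * A))ᵀ := by rw [h1]
    _ = ((G₀ * A) * (G * A))ᵀ := by simp only [Matrix.mul_assoc]
    _ = (G * A)ᵀ * (G₀ * A)ᵀ := by rw [Matrix.transpose_mul]
    _ = G * A * (G₀ * A) := by rw [h4, e4]
  have hstep1 : G * A * G₀ = G₀ := by
    calc G * A * G₀ = G * A * (G₀ * A * G₀) := by rw [e2]
    _ = (G * A * (G₀ * A)) * G₀ := by simp only [Matrix.mul_assoc]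
    _ = G₀ * A * G₀ := by rw [← ha]
    _ = G₀ := e2
  have hb : A * G₀ = (A * G₀) * (A * G) := by
    calc A * G₀ = (A * G₀)ᵀ := e3.symm
    _ = ((A * G * A) * G₀)ᵀ := by rw [h1]
    _ = ((A * G) * (A * G₀))ᵀ := by simp only [Matrix.mul_assoc]
    _ = (A * G₀)ᵀ * (A * G)ᵀ := by rw [Matrix.transpose_mul]
    _ = (A * G₀) * (A * G) := by rw [h3, e3]
  have hstep2 : G * A * G₀ = G := by
    calc G * A * G₀ = G * (A * G₀) := by rw [mul_assoc]
    _ = G * ((A * G₀) * (A * G)) := by rw [← hb]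
    _ = G * ((A * G₀ * A) * G) := by simp only [Matrix.mul_assoc]
    _ = G * (A * G) := by rw [e1]
    _ = G * A * G := by rw [mul_assoc]
    _ = G := h2
  rw [← hstep1, hstep2]

end Aux

/-- The filtered quasi-Helmholtz projector is dominated by the full one:
`P^Σ P_n^Σ = P_n^Σ P^Σ = P_n^Σ`. -/
theorem filtered_projector_dominated_by_full_projector
    (N Ns : ℕ) (Sg : Matrix (Fin N) (Fin Ns) ℝ)
    (W : Matrix (Fin Ns) (Fin Ns) ℝ) (s : Fin Ns → ℝ)
    (hW : Wᵀ * W = 1) (hs : ∀ i, 0 ≤ s i)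
    (hM : Sgᵀ * Sg = W * Matrix.diagonal s * Wᵀ)
    (G : Matrix (Fin Ns) (Fin Ns) ℝ)
    (h1 : (Sgᵀ * Sg) * G * (Sgᵀ * Sg) = Sgᵀ * Sg)
    (h2 : G * (Sgᵀ * Sg) * G = G)
    (h3 : ((Sgᵀ * Sg) * G)ᵀ = (Sgᵀ * Sg) * G)
    (h4 : (G * (Sgᵀ * Sg))ᵀ = G * (Sgᵀ * Sg))
    (P : Matrix (Fin N) (Fin N) ℝ)
    (hP : P = Sg * G * Sgᵀ)
    (n : ℕ) (hn : n ≤ Ns)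
    (Mpn : Matrix (Fin Ns) (Fin Ns) ℝ)
    (hMpn : Mpn = W * Matrix.diagonal
      (fun i : Fin Ns => if Ns - n ≤ (i : ℕ) ∧ s i ≠ 0 then (s i)⁻¹ else 0) * Wᵀ)
    (Pn : Matrix (Fin N) (Fin N) ℝ)
    (hPn : Pn = Sg * Mpn * Sgᵀ) :
    P * Pn = Pn ∧ Pn * P = Pn := by
  set t : Fin Ns → ℝ := fun i => if s i ≠ 0 then (s i)⁻¹ else 0 with ht
  set f : Fin Ns → ℝ := fun i : Fin Ns => if Ns - n ≤ (i : ℕ) ∧ s i ≠ 0 then (s i)⁻¹ else 0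
    with hf
  set G₀ : Matrix (Fin Ns) (Fin Ns) ℝ := W * Matrix.diagonal t * Wᵀ with hG₀
  have hdiag : ∀ (g h : Fin Ns → ℝ), (∀ i, g i = h i) →
      W * Matrix.diagonal g * Wᵀ = W * Matrix.diagonal h * Wᵀ := by
    intro g h hgh
    rw [funext hgh]
  -- pointwise facts
  have hts : ∀ i, t i * s i * t i = t i := by
    intro i
    by_cases h : s i = 0
    · simp [ht, h]
    · have ht' : t i = (s i)⁻¹ := by simp [ht, h]
      rw [ht', inv_mul_cancel₀ h, one_mul]
  have hst : ∀ i, s i * t i * s i = s i := by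
    intro i
    by_cases h : s i = 0
    · simp [ht, h]
    · have ht' : t i = (s i)⁻¹ := by simp [ht, h]
      rw [ht', mul_inv_cancel₀ h, one_mul]
  have htsf : ∀ i, t i * s i * f i = f i := by
    intro i
    by_cases h : s i = 0
    · have hf0 : f i = 0 := by simp [hf, h]
      simp [ht, h, hf0]
    · have ht' : t i = (s i)⁻¹ := by simp [ht, h]
      rw [ht', inv_mul_cancel₀ h, one_mul]
  have hfst : ∀ i, f i * (s i * t i) = f i := by
    intro i
    by_cases h : s i = 0
    · have hf0 : f i = 0 := by simp [hf, h]
      simp [ht, h, hf0]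
    · have ht' : t i = (s i)⁻¹ := by simp [ht, h]
      rw [ht', mul_inv_cancel₀ h, mul_one]
  -- Penrose equations for G₀
  have e1 : (Sgᵀ * Sg) * G₀ * (Sgᵀ * Sg) = Sgᵀ * Sg := by
    rw [hM, hG₀]
    simp only [aux_mulW W hW]
    exact hdiag _ _ hst
  have e2 : G₀ * (Sgᵀ * Sg) * G₀ = G₀ := by
    rw [hM, hG₀]
    simp only [aux_mulW W hW]
    exact hdiag _ _ hts
  have e3 : ((Sgᵀ * Sg) * G₀)ᵀ = (Sgᵀ * Sg) * G₀ := by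
    rw [hM, hG₀]
    simp only [aux_mulW W hW]
    exact aux_symm W _
  have e4 : (G₀ * (Sgᵀ * Sg))ᵀ = G₀ * (Sgᵀ * Sg) := by
    rw [hM, hG₀]
    simp only [aux_mulW W hW]
    exact aux_symm W _
  have hGG₀ : G = G₀ := aux_pinv_unique (Sgᵀ * Sg) G G₀ h1 h2 h3 h4 e1 e2 e3 e4
  -- key identities
  have key1 : G * (Sgᵀ * Sg) * Mpn = Mpn := by
    rw [hGG₀, hM, hMpn, hG₀]
    simp only [aux_mulW W hW]
    exact hdiag _ _ htsf
  have key2 : Mpn * ((Sgᵀ * Sg) * G) = Mpn := by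
    rw [hGG₀, hM, hMpn, hG₀]
    simp only [aux_mulW W hW]
    exact hdiag _ _ hfst
  constructor
  · rw [hP, hPn]
    conv_rhs => rw [← key1]
    simp only [Matrix.mul_assoc]
  · rw [hP, hPn]
    conv_rhs => rw [← key2]
    simp only [Matrix.mul_assoc]
end

section
/- Let Σ be a real N×N_s matrix and Λ a real N×N_l matrix with Σᵀ Λ = 0. Let P^Σ := Σ G_Σ Σᵀ and P^Λ := Λ G_Λ Λᵀ, where G_Σ and G_Λ satisfy the four Penrose equations for Σᵀ Σ and Λᵀ Λ respectively. Let Λᵀ Λ = W S Wᵀ be an eigendecomposition with W orthogonal and S diagonal with nonnegative entries, and for 0 ≤ n ≤ N_l set P_n^Λ := Λ W S⁺_n Wᵀ Λᵀ with [S⁺_n]_{ii} = 1/[S]_{ii} if i > N_l − n and [S]_{ii} ≠ 0, and 0 otherwise. Then the filtered harmonic-loop projector P_n^{ΛH} := P_n^Λ + I − P^Σ − P^Λ is symmetric and idempotent (i.e., an orthogonal projector). -/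
open Matrix

lemma mat_transpose_mul_self_eq_zero {m k : Type} [Fintype m] [Fintype k]
    {M : Matrix m k ℝ} (h : Mᵀ * M = 0) : M = 0 := by
  ext i j
  have hd : (Mᵀ * M) j j = 0 := by rw [h]; rfl
  rw [Matrix.mul_apply] at hd
  simp only [Matrix.transpose_apply] at hd
  have hnn : ∀ x ∈ Finset.univ, 0 ≤ M x j * M x j := fun x _ => mul_self_nonneg _
  have := (Finset.sum_eq_zero_iff_of_nonneg hnn).mp hd i (Finset.mem_univ i)
  simpa using mul_self_eq_zero.mp this

lemma penrose_key {m k : Type} [Fintype m] [Fintype k] (L : Matrix m k ℝ)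
    (G : Matrix k k ℝ)
    (h1 : (Lᵀ * L) * G * (Lᵀ * L) = Lᵀ * L)
    (h4 : (G * (Lᵀ * L))ᵀ = G * (Lᵀ * L)) :
    L * G * (Lᵀ * L) = L := by
  have hAB : (Lᵀ * L) * (G * (Lᵀ * L)) = Lᵀ * L := by rw [← Matrix.mul_assoc]; exact h1
  set B := G * (Lᵀ * L) with hB
  have hAB' : Lᵀ * (L * B) = Lᵀ * L := by rw [← Matrix.mul_assoc]; exact hAB
  have hzero : (L * B - L)ᵀ * (L * B - L) = 0 := by
    rw [Matrix.transpose_sub, Matrix.transpose_mul, Matrix.sub_mul,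
      Matrix.mul_sub, Matrix.mul_sub]
    simp only [Matrix.mul_assoc, hAB']
    rw [h4]
    abel
  have hM0 : L * B = L := sub_eq_zero.mp (mat_transpose_mul_self_eq_zero hzero)
  rw [Matrix.mul_assoc]
  exact hM0

/-- Penrose conditions (1) and (4) hold for the transpose of the pseudoinverse. -/
lemma penrose_transpose {m k : Type} [Fintype m] [Fintype k] (L : Matrix m k ℝ)
    (G : Matrix k k ℝ)
    (h1 : (Lᵀ * L) * G * (Lᵀ * L) = Lᵀ * L)
    (h3 : ((Lᵀ * L) * G)ᵀ = (Lᵀ * L) * G) :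
    (Lᵀ * L) * Gᵀ * (Lᵀ * L) = Lᵀ * L ∧ (Gᵀ * (Lᵀ * L))ᵀ = Gᵀ * (Lᵀ * L) := by
  have hAsym : (Lᵀ * L)ᵀ = Lᵀ * L := by
    rw [Matrix.transpose_mul, Matrix.transpose_transpose]
  have e1 : Gᵀ * (Lᵀ * L) = (Lᵀ * L) * G := by
    have h := h3
    rw [Matrix.transpose_mul, hAsym] at h
    exact h
  constructor
  · have h := congrArg Matrix.transpose h1
    simp only [Matrix.transpose_mul, Matrix.transpose_transpose] at h
    rw [Matrix.mul_assoc]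
    exact h
  · rw [e1]
    exact h3

/-- The filtered harmonic-loop projector `P_n^{ΛH} := P_n^Λ + I − P^Σ − P^Λ`
is symmetric and idempotent (an orthogonal projector). -/
theorem filtered_harmonic_loop_projector_is_orthogonal_projector
    (N Ns Nl : ℕ) (Sg : Matrix (Fin N) (Fin Ns) ℝ) (Lm : Matrix (Fin N) (Fin Nl) ℝ)
    (horth : Sgᵀ * Lm = 0)
    (GSg : Matrix (Fin Ns) (Fin Ns) ℝ)
    (hS1 : (Sgᵀ * Sg) * GSg * (Sgᵀ * Sg) = Sgᵀ * Sg)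
    (hS2 : GSg * (Sgᵀ * Sg) * GSg = GSg)
    (hS3 : ((Sgᵀ * Sg) * GSg)ᵀ = (Sgᵀ * Sg) * GSg)
    (hS4 : (GSg * (Sgᵀ * Sg))ᵀ = GSg * (Sgᵀ * Sg))
    (GLm : Matrix (Fin Nl) (Fin Nl) ℝ)
    (hL1 : (Lmᵀ * Lm) * GLm * (Lmᵀ * Lm) = Lmᵀ * Lm)
    (hL2 : GLm * (Lmᵀ * Lm) * GLm = GLm)
    (hL3 : ((Lmᵀ * Lm) * GLm)ᵀ = (Lmᵀ * Lm) * GLm)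
    (hL4 : (GLm * (Lmᵀ * Lm))ᵀ = GLm * (Lmᵀ * Lm))
    (PS PL : Matrix (Fin N) (Fin N) ℝ)
    (hPS : PS = Sg * GSg * Sgᵀ)
    (hPL : PL = Lm * GLm * Lmᵀ)
    (W : Matrix (Fin Nl) (Fin Nl) ℝ) (s : Fin Nl → ℝ)
    (hW : Wᵀ * W = 1) (hs : ∀ i, 0 ≤ s i)
    (hM : Lmᵀ * Lm = W * Matrix.diagonal s * Wᵀ)
    (n : ℕ) (hn : n ≤ Nl)
    (PLn : Matrix (Fin N) (Fin N) ℝ)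
    (hPLn : PLn = Lm * (W * Matrix.diagonal
      (fun i : Fin Nl => if Nl - n ≤ (i : ℕ) ∧ s i ≠ 0 then (s i)⁻¹ else 0) * Wᵀ) * Lmᵀ)
    (PLH : Matrix (Fin N) (Fin N) ℝ)
    (hPLH : PLH = PLn + 1 - PS - PL) :
    PLHᵀ = PLH ∧ PLH * PLH = PLH := by
  set f : Fin Nl → ℝ :=
    fun i : Fin Nl => if Nl - n ≤ (i : ℕ) ∧ s i ≠ 0 then (s i)⁻¹ else 0 with hf
  -- orthogonality in both orders
  have hLmSg : Lmᵀ * Sg = 0 := by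
    have := congrArg Matrix.transpose horth
    simpa [Matrix.transpose_mul] using this
  have hSL0 : ∀ (p : Type) (X : Matrix (Fin Nl) p ℝ), Sgᵀ * (Lm * X) = 0 := by
    intro p X; rw [← Matrix.mul_assoc, horth, Matrix.zero_mul]
  have hLS0 : ∀ (p : Type) (X : Matrix (Fin Ns) p ℝ), Lmᵀ * (Sg * X) = 0 := by
    intro p X; rw [← Matrix.mul_assoc, hLmSg, Matrix.zero_mul]
  -- key absorption identities
  have hkeyL : Lm * GLm * (Lmᵀ * Lm) = Lm := penrose_key Lm GLm hL1 hL4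
  have hkeyS : Sg * GSg * (Sgᵀ * Sg) = Sg := penrose_key Sg GSg hS1 hS4
  obtain ⟨hL1', hL4'⟩ := penrose_transpose Lm GLm hL1 hL3
  obtain ⟨hS1', hS4'⟩ := penrose_transpose Sg GSg hS1 hS3
  have hkeyL' : Lm * GLmᵀ * (Lmᵀ * Lm) = Lm := penrose_key Lm GLmᵀ hL1' hL4'
  have hkeyS' : Sg * GSgᵀ * (Sgᵀ * Sg) = Sg := penrose_key Sg GSgᵀ hS1' hS4'
  -- idempotence of PS, PL
  have hPL2 : PL * PL = PL := by
    rw [hPL]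
    calc (Lm * GLm * Lmᵀ) * (Lm * GLm * Lmᵀ)
        = (Lm * GLm * (Lmᵀ * Lm)) * (GLm * Lmᵀ) := by simp only [Matrix.mul_assoc]
      _ = Lm * (GLm * Lmᵀ) := by rw [hkeyL]
      _ = Lm * GLm * Lmᵀ := by rw [← Matrix.mul_assoc]
  have hPS2 : PS * PS = PS := by
    rw [hPS]
    calc (Sg * GSg * Sgᵀ) * (Sg * GSg * Sgᵀ)
        = (Sg * GSg * (Sgᵀ * Sg)) * (GSg * Sgᵀ) := by simp only [Matrix.mul_assoc]
      _ = Sg * (GSg * Sgᵀ) := by rw [hkeyS]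
      _ = Sg * GSg * Sgᵀ := by rw [← Matrix.mul_assoc]
  -- symmetry of PS, PL
  have hPLsym : PLᵀ = PL := by
    have h : PLᵀ * PL = PL := by
      rw [hPL]
      calc (Lm * GLm * Lmᵀ)ᵀ * (Lm * GLm * Lmᵀ)
          = (Lm * GLmᵀ * (Lmᵀ * Lm)) * (GLm * Lmᵀ) := by
            simp only [Matrix.transpose_mul, Matrix.transpose_transpose, Matrix.mul_assoc]
        _ = Lm * (GLm * Lmᵀ) := by rw [hkeyL']
        _ = Lm * GLm * Lmᵀ := by rw [← Matrix.mul_assoc]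
    have h2 := congrArg Matrix.transpose h
    rw [Matrix.transpose_mul, Matrix.transpose_transpose, h] at h2
    exact h2.symm
  have hPSsym : PSᵀ = PS := by
    have h : PSᵀ * PS = PS := by
      rw [hPS]
      calc (Sg * GSg * Sgᵀ)ᵀ * (Sg * GSg * Sgᵀ)
          = (Sg * GSgᵀ * (Sgᵀ * Sg)) * (GSg * Sgᵀ) := by
            simp only [Matrix.transpose_mul, Matrix.transpose_transpose, Matrix.mul_assoc]
        _ = Sg * (GSg * Sgᵀ) := by rw [hkeyS']
        _ = Sg * GSg * Sgᵀ := by rw [← Matrix.mul_assoc]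
    have h2 := congrArg Matrix.transpose h
    rw [Matrix.transpose_mul, Matrix.transpose_transpose, h] at h2
    exact h2.symm
  -- mixed products vanish
  have hPSPL : PS * PL = 0 := by
    rw [hPS, hPL]; simp only [Matrix.mul_assoc, hSL0, Matrix.mul_zero]
  have hPLPS : PL * PS = 0 := by
    rw [hPS, hPL]; simp only [Matrix.mul_assoc, hLS0, Matrix.mul_zero]
  have hPLnPS : PLn * PS = 0 := by
    rw [hPLn, hPS]; simp only [Matrix.mul_assoc, hLS0, Matrix.mul_zero]
  have hPSPLn : PS * PLn = 0 := by
    rw [hPLn, hPS]; simp only [Matrix.mul_assoc, hSL0, Matrix.mul_zero]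
  -- PL absorbs PLn
  have hPLPLn : PL * PLn = PLn := by
    rw [hPL, hPLn]
    calc (Lm * GLm * Lmᵀ) * (Lm * (W * Matrix.diagonal f * Wᵀ) * Lmᵀ)
        = (Lm * GLm * (Lmᵀ * Lm)) * ((W * Matrix.diagonal f * Wᵀ) * Lmᵀ) := by
          simp only [Matrix.mul_assoc]
      _ = Lm * ((W * Matrix.diagonal f * Wᵀ) * Lmᵀ) := by rw [hkeyL]
      _ = Lm * (W * Matrix.diagonal f * Wᵀ) * Lmᵀ := by rw [← Matrix.mul_assoc]
  have hPLnsym : PLnᵀ = PLn := by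
    rw [hPLn]
    simp only [Matrix.transpose_mul, Matrix.transpose_transpose,
      Matrix.diagonal_transpose, Matrix.mul_assoc]
  have hPLnPL : PLn * PL = PLn := by
    have h2 := congrArg Matrix.transpose hPLPLn
    rw [Matrix.transpose_mul, hPLnsym, hPLsym] at h2
    exact h2
  -- PLn is idempotent
  have hfun : (fun i => f i * (s i * f i)) = f := by
    funext i
    simp only [hf]
    by_cases h : Nl - n ≤ (i : ℕ) ∧ s i ≠ 0
    · rw [if_pos h, mul_inv_cancel₀ h.2, mul_one]
    · rw [if_neg h, mul_zero, mul_zero]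
  have hDfs : Matrix.diagonal f * (Matrix.diagonal s * Matrix.diagonal f)
      = Matrix.diagonal f := by
    rw [Matrix.diagonal_mul_diagonal, Matrix.diagonal_mul_diagonal, hfun]
  have hWmid : (W * Matrix.diagonal f * Wᵀ) * (Lmᵀ * Lm) * (W * Matrix.diagonal f * Wᵀ)
      = W * Matrix.diagonal f * Wᵀ := by
    rw [hM]
    calc (W * Matrix.diagonal f * Wᵀ) * (W * Matrix.diagonal s * Wᵀ)
          * (W * Matrix.diagonal f * Wᵀ)
        = W * (Matrix.diagonal f * ((Wᵀ * W) * (Matrix.diagonal s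
            * ((Wᵀ * W) * (Matrix.diagonal f * Wᵀ))))) := by simp only [Matrix.mul_assoc]
      _ = W * (Matrix.diagonal f * (Matrix.diagonal s * (Matrix.diagonal f * Wᵀ))) := by
          rw [hW]; simp only [Matrix.one_mul]
      _ = W * ((Matrix.diagonal f * (Matrix.diagonal s * Matrix.diagonal f)) * Wᵀ) := by
          simp only [Matrix.mul_assoc]
      _ = W * (Matrix.diagonal f * Wᵀ) := by rw [hDfs]
      _ = W * Matrix.diagonal f * Wᵀ := by rw [← Matrix.mul_assoc]
  have hPLn2 : PLn * PLn = PLn := by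
    rw [hPLn]
    calc (Lm * (W * Matrix.diagonal f * Wᵀ) * Lmᵀ) * (Lm * (W * Matrix.diagonal f * Wᵀ) * Lmᵀ)
        = Lm * (((W * Matrix.diagonal f * Wᵀ) * (Lmᵀ * Lm)
            * (W * Matrix.diagonal f * Wᵀ)) * Lmᵀ) := by simp only [Matrix.mul_assoc]
      _ = Lm * ((W * Matrix.diagonal f * Wᵀ) * Lmᵀ) := by rw [hWmid]
      _ = Lm * (W * Matrix.diagonal f * Wᵀ) * Lmᵀ := by rw [← Matrix.mul_assoc]
  -- conclusion
  constructor
  · rw [hPLH]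
    simp only [Matrix.transpose_sub, Matrix.transpose_add, Matrix.transpose_one,
      hPLnsym, hPSsym, hPLsym]
  · rw [hPLH]
    simp only [Matrix.sub_mul, Matrix.add_mul, Matrix.mul_sub, Matrix.mul_add,
      Matrix.one_mul, Matrix.mul_one, hPLn2, hPLnPS, hPLnPL, hPSPLn, hPS2, hPSPL,
      hPLPLn, hPLPS, hPL2]
    abel
end
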